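/- Assume the workload is nondegenerate in the sense that max_{j1, j2 ∈ Fin k} ∑_l |w_{l,j1} − w_{l,j2}| > 0, and let ε_DP := (max_{j1,j2} ∑_l |w_{l,j1} − w_{l,j2}|)/b. Then for every α ∈ (0, 1/k], the exponentiated PML bound satisfies B_thm(α) := max_{I ⊆ Fin m} exp(−(min_j c_j^I)/b) / (α ∑_j exp(−c_j^I/b) + (1 − kα) exp(−(max_j c_j^I)/b)) < exp(ε_DP); i.e., the context-aware leakage bound is strictly smaller than the standard differential-privacy parameter of the Laplace mechanism. -/

import Mathlib

open Finset Real

noncomputable section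

/-- Signed column sum `c_j^I := ∑_{l ∈ I} w_{l,j} − ∑_{l ∉ I} w_{l,j}`. -/
def signedColSum {m k : ℕ} (W : Fin m → Fin k → ℝ) (I : Finset (Fin m)) (j : Fin k) : ℝ :=
  (∑ l ∈ I, W l j) - ∑ l ∈ Iᶜ, W l j

/-- The exponentiated PML bound `B_thm(α)`. -/
def Bthm {m k : ℕ} (W : Fin m → Fin k → ℝ) (b α : ℝ) : ℝ :=
  ⨆ I : Finset (Fin m),
    Real.exp (-(⨅ j, signedColSum W I j) / b) /
      (α * (∑ j, Real.exp (-(signedColSum W I j) / b)) +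
        (1 - (k : ℝ) * α) * Real.exp (-(⨆ j, signedColSum W I j) / b))

/-- The DP parameter of the Laplace mechanism with scale `b` on workload `W`. -/
def εDP {m k : ℕ} (W : Fin m → Fin k → ℝ) (b : ℝ) : ℝ :=
  (⨆ j1 : Fin k, ⨆ j2 : Fin k, ∑ l, |W l j1 - W l j2|) / b

/-- For a nondegenerate workload, the context-aware bound is strictly smaller than the
standard DP guarantee: `B_thm(α) < exp(ε_DP)` for all `α ∈ (0, 1/k]`. -/
theorem Bthm_lt_exp_epsDP
    (k m : ℕ) (hk : 0 < k) (hm : 0 < m)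
    (b : ℝ) (hb : 0 < b) (W : Fin m → Fin k → ℝ)
    (hW : 0 < ⨆ j1 : Fin k, ⨆ j2 : Fin k, ∑ l, |W l j1 - W l j2|)
    (α : ℝ) (hα : 0 < α) (hαk : α ≤ 1 / (k : ℝ)) :
    Bthm W b α < Real.exp (εDP W b) := by
  haveI : NeZero k := ⟨hk.ne'⟩
  set S := ⨆ j1 : Fin k, ⨆ j2 : Fin k, ∑ l, |W l j1 - W l j2| with hSdef
  have hkpos : (0:ℝ) < (k:ℝ) := by exact_mod_cast hk
  have hkα : (k:ℝ) * α ≤ 1 := by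
    rw [mul_comm, ← le_div_iff₀ hkpos] at *; exact hαk
  have hα1 : α ≤ 1 := by
    nlinarith [show (1:ℝ) ≤ (k:ℝ) from by exact_mod_cast hk]
  set D := Real.exp (-S / b) with hDdef
  have hD0 : (0:ℝ) < D := Real.exp_pos _
  have hD1 : D < 1 := by
    rw [hDdef, Real.exp_lt_one_iff, neg_div]
    linarith [div_pos hW hb]
  have hden : (0:ℝ) < α + (1 - α) * D :=
    add_pos_of_pos_of_nonneg hα (mul_nonneg (by linarith) hD0.le)
  -- step 1 : each term bounded
  have key : ∀ I : Finset (Fin m),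
      Real.exp (-(⨅ j, signedColSum W I j) / b) /
        (α * (∑ j, Real.exp (-(signedColSum W I j) / b)) +
          (1 - (k : ℝ) * α) * Real.exp (-(⨆ j, signedColSum W I j) / b))
        ≤ (α + (1 - α) * D)⁻¹ := by
    intro I
    set c := signedColSum W I with hc
    have hbdd : BddAbove (Set.range c) := Finite.bddAbove_range _
    have hbddB : BddBelow (Set.range c) := Finite.bddBelow_range _
    obtain ⟨j1, hj1⟩ := exists_eq_ciSup_of_finite (f := c)
    obtain ⟨j2, hj2⟩ := exists_eq_ciInf_of_finite (f := c)
    -- max minus min ≤ S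
    have hMm : (⨆ j, c j) - (⨅ j, c j) ≤ S := by
      rw [← hj1, ← hj2]
      have h1 : c j1 - c j2 ≤ ∑ l, |W l j1 - W l j2| := by
        have e1 : c j1 - c j2 =
            (∑ l ∈ I, (W l j1 - W l j2)) - ∑ l ∈ Iᶜ, (W l j1 - W l j2) := by
          simp [hc, signedColSum, Finset.sum_sub_distrib]; ring
        have e2 : (∑ l ∈ I, |W l j1 - W l j2|) + ∑ l ∈ Iᶜ, |W l j1 - W l j2|
            = ∑ l, |W l j1 - W l j2| := Finset.sum_add_sum_compl I _
        have h2 : ∑ l ∈ I, (W l j1 - W l j2) ≤ ∑ l ∈ I, |W l j1 - W l j2| :=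
          Finset.sum_le_sum fun l _ => le_abs_self _
        have h3 : -(∑ l ∈ Iᶜ, |W l j1 - W l j2|) ≤ ∑ l ∈ Iᶜ, (W l j1 - W l j2) := by
          rw [← Finset.sum_neg_distrib]
          exact Finset.sum_le_sum fun l _ => neg_abs_le _
        linarith
      refine h1.trans ?_
      have hb1 : BddAbove (Set.range fun j2' => ∑ l, |W l j1 - W l j2'|) :=
        Finite.bddAbove_range _
      have hb2 : BddAbove (Set.range fun j1' => ⨆ j2', ∑ l, |W l j1' - W l j2'|) :=
        Finite.bddAbove_range _
      exact le_trans (le_ciSup hb1 j2) (le_ciSup hb2 j1)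
    set N := Real.exp (-(⨅ j, c j) / b) with hN
    have hN0 : (0:ℝ) < N := Real.exp_pos _
    have hexpM : D * N ≤ Real.exp (-(⨆ j, c j) / b) := by
      rw [hDdef, hN, ← Real.exp_add]
      apply Real.exp_le_exp.mpr
      rw [← add_div]
      gcongr
      linarith [hMm]
    have hterm : ∀ j, D * N ≤ Real.exp (-(c j) / b) := by
      intro j
      refine hexpM.trans (Real.exp_le_exp.mpr ?_)
      gcongr
      exact le_ciSup hbdd j
    -- sum lower bound
    have hsum : N + ((k:ℝ) - 1) * (D * N) ≤ ∑ j, Real.exp (-(c j) / b) := by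
      have hsplit : ∑ j, Real.exp (-(c j) / b)
          = Real.exp (-(c j2) / b) + ∑ j ∈ Finset.univ.erase j2, Real.exp (-(c j) / b) :=
        (Finset.add_sum_erase _ _ (Finset.mem_univ j2)).symm
      have hcard : ((Finset.univ.erase j2).card : ℝ) = (k:ℝ) - 1 := by
        rw [Finset.card_erase_of_mem (Finset.mem_univ j2)]
        simp [Nat.cast_sub hk]
      have herase : ((k:ℝ) - 1) * (D * N) ≤ ∑ j ∈ Finset.univ.erase j2, Real.exp (-(c j) / b) := by
        calc ((k:ℝ) - 1) * (D * N)
            = ((Finset.univ.erase j2).card : ℝ) * (D * N) := by rw [hcard]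
          _ ≤ ∑ j ∈ Finset.univ.erase j2, Real.exp (-(c j) / b) := by
              rw [← nsmul_eq_mul]
              exact Finset.card_nsmul_le_sum _ _ _ fun j _ => hterm j
      have hNj2 : Real.exp (-(c j2) / b) = N := by rw [hN, hj2]
      rw [hsplit, hNj2]; linarith
    have hkα0 : 0 ≤ 1 - (k:ℝ) * α := by linarith
    have hdenge : (α + (1 - α) * D) * N ≤
        α * (∑ j, Real.exp (-(c j) / b)) +
          (1 - (k : ℝ) * α) * Real.exp (-(⨆ j, c j) / b) := by
      nlinarith [mul_le_mul_of_nonneg_left hsum hα.le,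
        mul_le_mul_of_nonneg_left hexpM hkα0]
    have hden2 : (0:ℝ) < α * (∑ j, Real.exp (-(c j) / b)) +
        (1 - (k : ℝ) * α) * Real.exp (-(⨆ j, c j) / b) :=
      lt_of_lt_of_le (by positivity) hdenge
    calc Real.exp (-(⨅ j, c j) / b) /
        (α * (∑ j, Real.exp (-(c j) / b)) +
          (1 - (k : ℝ) * α) * Real.exp (-(⨆ j, c j) / b))
        ≤ N / ((α + (1 - α) * D) * N) := by
          apply div_le_div_of_nonneg_left hN0.le (by positivity) hdenge
      _ = (α + (1 - α) * D)⁻¹ := by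
          rw [mul_comm, ← div_div, div_self hN0.ne', one_div]
  have hsup : Bthm W b α ≤ (α + (1 - α) * D)⁻¹ := ciSup_le key
  refine lt_of_le_of_lt hsup ?_
  have hεeq : Real.exp (εDP W b) = D⁻¹ := by
    rw [εDP, hDdef, ← hSdef, ← Real.exp_neg, neg_div, neg_neg]
  rw [hεeq]
  apply inv_strictAnti₀ hD0
  nlinarith

end
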